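/- Let M be a Turing machine in Mathlib's TM0 model over a finite tape alphabet Γ and a finite state set Λ with decidable equality, started on the all-blank tape (input ε), and let N = Fintype.card Λ * Fintype.card Γ. Define the property P₁(M): 'M runs for at least 2 steps (it does not halt within its first step) and the head visits at least 2 distinct cells (the head position is nonzero after some number of steps)'. Then P₁(M) holds if and only if [M does not halt within 1 step, and there exists i ≤ N + 1 such that M has not halted within i steps and the head position after i steps is nonzero]; in particular, since the right-hand side is checkable by simulating M for at most N + 1 steps, the property P₁ is decidable. -/

import Mathlib

/-- One step of a TM0 machine, additionally tracking the net head displacement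
(`+1` for a right-move, `-1` for a left-move). -/
def stepPos {Γ Λ : Type} [Inhabited Γ] [Inhabited Λ] (M : Turing.TM0.Machine Γ Λ)
    (p : Turing.TM0.Cfg Γ Λ × ℤ) : Option (Turing.TM0.Cfg Γ Λ × ℤ) :=
  (Turing.TM0.step M p.1).map fun c' =>
    (c', p.2 +
      match M p.1.q p.1.Tape.head with
      | some (_, Turing.TM0.Stmt.move Turing.Dir.left) => -1
      | some (_, Turing.TM0.Stmt.move Turing.Dir.right) => 1
      | _ => 0)

/-- Run the machine for `n` steps from configuration `c`, tracking the head
position (net displacement from the starting cell); `none` means the machine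
halted at some point within the first `n` steps. -/
def runPos {Γ Λ : Type} [Inhabited Γ] [Inhabited Λ] (M : Turing.TM0.Machine Γ Λ)
    (c : Turing.TM0.Cfg Γ Λ) : ℕ → Option (Turing.TM0.Cfg Γ Λ × ℤ)
  | 0 => some (c, 0)
  | n + 1 => (runPos M c n).bind (stepPos M)

/-- The property `P₁`: on the all-blank input, the machine runs for at least 2 steps
(it does not halt within its first step) and the head visits at least 2 distinct
cells (the head position is nonzero after some number of steps). -/
def P₁ {Γ Λ : Type} [Inhabited Γ] [Inhabited Λ] (M : Turing.TM0.Machine Γ Λ) : Prop :=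
  Turing.TM0.step M (Turing.TM0.init ([] : List Γ)) ≠ none ∧
  ∃ (i : ℕ) (p : Turing.TM0.Cfg Γ Λ × ℤ),
    runPos M (Turing.TM0.init ([] : List Γ)) i = some p ∧ p.2 ≠ 0

section Aux

open Turing TM0

variable {Γ Λ : Type} [Inhabited Γ] [Inhabited Λ] (M : Machine Γ Λ)

lemma stepPos_shift (x : ℤ) (p : Cfg Γ Λ × ℤ) :
    stepPos M (p.1, x + p.2) = (stepPos M p).map (fun r => (r.1, x + r.2)) := by
  rcases p with ⟨c, z⟩
  unfold stepPos
  cases h : Turing.TM0.step M c <;> simp [add_assoc]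

lemma runPos_add (c : Cfg Γ Λ) (j m : ℕ) :
    runPos M c (j + m) = (runPos M c j).bind
      (fun p => (runPos M p.1 m).map (fun q => (q.1, p.2 + q.2))) := by
  induction m with
  | zero => cases h : runPos M c j <;> simp [runPos, h]
  | succ m ih =>
      show (runPos M c (j + m)).bind (stepPos M) = _
      rw [ih]
      cases h : runPos M c j with
      | none => simp
      | some p =>
          simp only [Option.bind_some]
          show ((runPos M p.1 m).map _).bind (stepPos M)
            = ((runPos M p.1 m).bind (stepPos M)).map _
          cases h2 : runPos M p.1 m with
          | none => simp
          | some q =>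
              simp only [Option.map_some, Option.bind_some]
              exact stepPos_shift M p.2 q

lemma Tape.write_write (T : Tape Γ) (a b : Γ) : (T.write b).write a = T.write a := rfl

lemma tape_inv (i : ℕ)
    (hz : ∀ j ≤ i, ∀ p : Cfg Γ Λ × ℤ, runPos M (Turing.TM0.init ([] : List Γ)) j = some p → p.2 = 0) :
    ∀ p : Cfg Γ Λ × ℤ, runPos M (Turing.TM0.init ([] : List Γ)) i = some p →
      p.1.Tape = Tape.write p.1.Tape.head ((Turing.TM0.init ([] : List Γ) : Cfg Γ Λ)).Tape := by
  induction i with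
  | zero =>
      rintro p hp
      simp only [runPos, Option.some_inj] at hp
      subst hp
      exact (Tape.write_self _).symm
  | succ i ih =>
      rintro p hp
      simp only [runPos] at hp
      rcases Option.bind_eq_some_iff.1 hp with ⟨p', hp', hstep⟩
      have hz' : ∀ j ≤ i, ∀ p : Cfg Γ Λ × ℤ,
          runPos M (Turing.TM0.init ([] : List Γ)) j = some p → p.2 = 0 :=
        fun j hj => hz j (Nat.le_succ_of_le hj)
      have hT := ih hz' p' hp'
      have h0' : p'.2 = 0 := hz' i le_rfl p' hp'
      have h0 : p.2 = 0 := hz (i+1) le_rfl p hp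
      rcases p' with ⟨⟨q, T⟩, z⟩
      simp only at hT h0'
      subst h0'
      rcases Option.map_eq_some_iff.1 hstep with ⟨c', hc', rfl⟩
      simp only at h0 ⊢
      cases hM : M q T.head with
      | none =>
          rw [show Turing.TM0.step M ⟨q, T⟩
            = (M q T.head).map (fun x => ⟨x.1, match x.2 with
                | Stmt.move d => T.move d
                | Stmt.write a => T.write a⟩) from rfl, hM] at hc'
          exact absurd hc' (by simp)
      | some x =>
          rcases x with ⟨q', s⟩
          rw [show Turing.TM0.step M ⟨q, T⟩
            = (M q T.head).map (fun x => ⟨x.1, match x.2 with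
                | Stmt.move d => T.move d
                | Stmt.write a => T.write a⟩) from rfl, hM] at hc'
          cases s with
          | move d =>
              cases d <;> simp [hM] at h0
          | write a =>
              simp only [Option.map_some, Option.some_inj] at hc'
              subst hc'
              show T.write a = Tape.write (T.write a).head _
              rw [show (T.write a).head = a from rfl, hT, Tape.write_write]

theorem P₁_iff_boundedCheck' {Γ Λ : Type} [Inhabited Γ] [Inhabited Λ]
    [Fintype Γ] [Fintype Λ] [DecidableEq Γ] [DecidableEq Λ]
    (M : Turing.TM0.Machine Γ Λ) :
    (Turing.TM0.step M (Turing.TM0.init ([] : List Γ)) ≠ none ∧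
  ∃ (i : ℕ) (p : Turing.TM0.Cfg Γ Λ × ℤ),
    runPos M (Turing.TM0.init ([] : List Γ)) i = some p ∧ p.2 ≠ 0) ↔
      (Turing.TM0.step M (Turing.TM0.init ([] : List Γ)) ≠ none ∧
        ∃ i ≤ Fintype.card Λ * Fintype.card Γ + 1,
          ∃ p : Turing.TM0.Cfg Γ Λ × ℤ,
            runPos M (Turing.TM0.init ([] : List Γ)) i = some p ∧ p.2 ≠ 0) := by
  classical
  constructor
  · rintro ⟨h1, i, p, hi, hp⟩
    refine ⟨h1, ?_⟩
    set c₀ : Cfg Γ Λ := Turing.TM0.init ([] : List Γ) with hc₀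
    have hP : ∃ n, ∃ p : Cfg Γ Λ × ℤ, runPos M c₀ n = some p ∧ p.2 ≠ 0 := ⟨i, p, hi, hp⟩
    obtain ⟨p₀, h₀, hp₀⟩ := Nat.find_spec hP
    set i₀ := Nat.find hP with hi₀
    have hmin : ∀ j < i₀, ∀ q : Cfg Γ Λ × ℤ, runPos M c₀ j = some q → q.2 = 0 := by
      intro j hj q hq
      by_contra h
      exact Nat.find_min hP hj ⟨q, hq, h⟩
    have hsome : ∀ j ≤ i₀, ∃ q : Cfg Γ Λ × ℤ, runPos M c₀ j = some q := by
      intro j hj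
      have hadd := runPos_add M c₀ j (i₀ - j)
      rw [Nat.add_sub_cancel' hj, h₀] at hadd
      cases hq : runPos M c₀ j with
      | none => rw [hq] at hadd; simp at hadd
      | some q => exact ⟨q, rfl⟩
    suffices hle : i₀ ≤ Fintype.card Λ * Fintype.card Γ + 1 from
      ⟨i₀, hle, p₀, h₀, hp₀⟩
    by_contra hN
    push_neg at hN
    have hcard : Fintype.card (Λ × Γ) < Fintype.card (Fin i₀) := by
      simp [Fintype.card_prod]
      omega
    set g : Fin i₀ → Λ × Γ := fun j =>
      (((runPos M c₀ j).getD (c₀, 0)).1.q, ((runPos M c₀ j).getD (c₀, 0)).1.Tape.head)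
      with hg
    obtain ⟨a, b, hab, hgab⟩ := Fintype.exists_ne_map_eq_of_card_lt g hcard
    -- wlog a < b
    wlog hlt : (a : ℕ) < (b : ℕ) generalizing a b
    · have hne : (a : ℕ) ≠ (b : ℕ) := fun h => hab (Fin.ext h)
      exact this b a hab.symm hgab.symm (by omega)
    obtain ⟨pj, hpj⟩ := hsome a (le_of_lt a.2)
    obtain ⟨pk, hpk⟩ := hsome b (le_of_lt b.2)
    have tj := tape_inv M a (fun l hl q hq => hmin l (lt_of_le_of_lt hl a.2) q hq) pj hpj
    have tk := tape_inv M b (fun l hl q hq => hmin l (lt_of_le_of_lt hl b.2) q hq) pk hpk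
    rw [hg] at hgab
    simp only [hpj, hpk, Option.getD_some] at hgab
    have hq : pj.1.q = pk.1.q := (Prod.mk.injEq _ _ _ _ ▸ hgab).1
    have hh : pj.1.Tape.head = pk.1.Tape.head := (Prod.mk.injEq _ _ _ _ ▸ hgab).2
    have hT : pj.1.Tape = pk.1.Tape := by rw [tj, tk, hh]
    have hcfg : pj.1 = pk.1 := by
      rcases hj1 : pj.1 with ⟨qj, Tj⟩
      rcases hk1 : pk.1 with ⟨qk, Tk⟩
      rw [hj1, hk1] at hq hT
      simp only at hq hT
      rw [hq, hT]
    have hzj : pj.2 = 0 := hmin a a.2 pj hpj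
    have hzk : pk.2 = 0 := hmin b b.2 pk hpk
    have hk := runPos_add M c₀ b (i₀ - b)
    rw [Nat.add_sub_cancel' (le_of_lt b.2), h₀, hpk] at hk
    simp only [Option.bind_some] at hk
    obtain ⟨r, hr, hpr⟩ := Option.map_eq_some_iff.1 hk.symm
    have hr2 : r.2 ≠ 0 := by
      intro h
      apply hp₀
      rw [← hpr, hzk, h]
      simp
    have hj' := runPos_add M c₀ a (i₀ - b)
    rw [hpj] at hj'
    simp only [Option.bind_some, hcfg, hr, Option.map_some] at hj'
    have hlt' : (a : ℕ) + (i₀ - (b : ℕ)) < i₀ := by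
      have := b.2
      omega
    have := hmin _ hlt' _ hj'
    simp only [hzj, zero_add] at this
    exact hr2 this
  · rintro ⟨h1, i, _, p, hi, hp⟩
    exact ⟨h1, i, p, hi, hp⟩


end Aux

/-- `P₁ M` holds iff `M` does not halt within 1 step and there is an `i ≤ card Λ * card Γ + 1`
at which `M` has not halted and the head position is nonzero; the right-hand side
is checkable by simulating `M` for at most `card Λ * card Γ + 1` steps, so `P₁` is decidable. -/
theorem P₁_iff_boundedCheck {Γ Λ : Type} [Inhabited Γ] [Inhabited Λ]
    [Fintype Γ] [Fintype Λ] [DecidableEq Γ] [DecidableEq Λ]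
    (M : Turing.TM0.Machine Γ Λ) :
    P₁ M ↔
      (Turing.TM0.step M (Turing.TM0.init ([] : List Γ)) ≠ none ∧
        ∃ i ≤ Fintype.card Λ * Fintype.card Γ + 1,
          ∃ p : Turing.TM0.Cfg Γ Λ × ℤ,
            runPos M (Turing.TM0.init ([] : List Γ)) i = some p ∧ p.2 ≠ 0) := by
  exact P₁_iff_boundedCheck' M
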